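/- Let r > 0, let a be a real number with 0 < a ≤ r/2, and let a' be a real number with 0 ≤ a' ≤ a/2. Place the station p at the origin (0,0) of the Euclidean plane and a sensor s at the point (a, 0). Then every point t ∈ ℝ² satisfying ‖t‖ ≤ r + a' and t·(1,0) ≥ (13/20)·‖t‖ (i.e., the angle between t and the positive x-axis is at most arccos(13/20)) satisfies dist(t, s) ≤ r or dist(t, p) ≤ r. In other words, the interval of angles [−arccos(13/20), arccos(13/20)] is covered at radius a' by the sensor at (a,0) together with a sensor at the station. -/

import Mathlib

open EuclideanSpace

theorem stmt_0 (r a a' : ℝ) (hr : 0 < r) (ha : 0 < a) (har : a ≤ r / 2)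
    (ha' : 0 ≤ a') (ha'a : a' ≤ a / 2)
    (p s : EuclideanSpace ℝ (Fin 2))
    (hp : p = !₂[0, 0]) (hs : s = !₂[a, 0]) :
    ∀ t : EuclideanSpace ℝ (Fin 2),
      ‖t‖ ≤ r + a' → (13 / 20 : ℝ) * ‖t‖ ≤ t 0 →
      dist t s ≤ r ∨ dist t p ≤ r := by
  intro t hle hang
  have hn : ‖t‖ ^ 2 = t 0 ^ 2 + t 1 ^ 2 := by
    rw [EuclideanSpace.norm_eq]
    rw [Real.sq_sqrt (by positivity)]
    simp [Fin.sum_univ_two, sq_abs]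
  have hn0 : (0:ℝ) ≤ ‖t‖ := norm_nonneg t
  by_cases h : ‖t‖ ≤ r
  · right
    have : dist t p = ‖t‖ := by
      rw [hp]
      have : (!₂[0,0] : EuclideanSpace ℝ (Fin 2)) = 0 := by
        ext i; fin_cases i <;> simp
      rw [this, dist_zero_right]
    linarith [this.le, this.ge]
  · left
    push_neg at h
    rw [hs, EuclideanSpace.dist_eq]
    have hsq : (t 0 - a) ^ 2 + (t 1 - 0) ^ 2 ≤ r ^ 2 := by
      nlinarith [mul_nonneg (by linarith : (0:ℝ) ≤ r + a/2 - ‖t‖)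
        (by linarith : (0:ℝ) ≤ r + a/2 + ‖t‖ - 13/10 * a),
        mul_le_mul_of_nonneg_left hang ha.le]
    calc Real.sqrt (∑ i, dist (t i) ((!₂[a,0] : EuclideanSpace ℝ (Fin 2)) i) ^ 2)
        = Real.sqrt ((t 0 - a) ^ 2 + (t 1 - 0) ^ 2) := by
          congr 1
          simp [Fin.sum_univ_two, Real.dist_eq, sq_abs]
      _ ≤ Real.sqrt (r ^ 2) := Real.sqrt_le_sqrt hsq
      _ = r := Real.sqrt_sq hr.le
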